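/- arXiv:1308.5771 — 9 statements merged into one kernel-verified Lean document; each statement's English description precedes it below -/
import Mathlib

section
/- Let f1, Cy, Cx, θ, λ, ρ, Ȳ, X̄ be real numbers with X̄ ≠ 0 and Cx ≠ 0, and set A = f1·Cy²·(1 − ρ²). Define M : ℝ × ℝ → ℝ by M(q1, q2) = Ȳ²(q1 − 1)² + f1·[ q1²·Ȳ²·(Cy² + θ²Cx²(1 + λ)²/4 − (1 + λ)·θ·ρ·Cy·Cx) + q2²·X̄²·Cx² − 2·q1·q2·Ȳ·X̄·Cx·(ρ·Cy − (1 + λ)·θ·Cx/2) ], and set q10 = 1/(1 + A) and q20 = q10·(Ȳ/(X̄·Cx))·(ρ·Cy − ((1 + λ)/2)·θ·Cx). If f1 > 0, Cy > 0, Cx > 0 and ρ² < 1, then for all real q1, q2 one has M(q1, q2) ≥ M(q10, q20); i.e. (q10, q20) is a global minimizer of the first-order mean squared error of the proposed estimator ȳ_λ. -/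
/-- The optimum weights (q10, q20) globally minimize the first-order
MSE `M` of the proposed estimator ȳ_λ. -/
theorem proposed_weights_global_min
    (f1 Cy Cx θ lam ρ Ybar Xbar A : ℝ)
    (hXbar : Xbar ≠ 0) (hCxne : Cx ≠ 0)
    (hA : A = f1 * Cy ^ 2 * (1 - ρ ^ 2))
    (M : ℝ × ℝ → ℝ)
    (hM : ∀ q1 q2 : ℝ, M (q1, q2) =
      Ybar ^ 2 * (q1 - 1) ^ 2 +
        f1 * (q1 ^ 2 * Ybar ^ 2 *
            (Cy ^ 2 + θ ^ 2 * Cx ^ 2 * (1 + lam) ^ 2 / 4 - (1 + lam) * θ * ρ * Cy * Cx) +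
          q2 ^ 2 * Xbar ^ 2 * Cx ^ 2 -
          2 * q1 * q2 * Ybar * Xbar * Cx * (ρ * Cy - (1 + lam) * θ * Cx / 2)))
    (q10 q20 : ℝ)
    (hq10 : q10 = 1 / (1 + A))
    (hq20 : q20 = q10 * (Ybar / (Xbar * Cx)) * (ρ * Cy - ((1 + lam) / 2) * θ * Cx))
    (hf1 : f1 > 0) (hCy : Cy > 0) (hCx : Cx > 0) (hρ : ρ ^ 2 < 1) :
    ∀ q1 q2 : ℝ, M (q1, q2) ≥ M (q10, q20) := by
  intro q1 q2
  have hr : (1:ℝ) - ρ ^ 2 > 0 := by linarith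
  have hApos : A > 0 := by rw [hA]; positivity
  have h1A : (1 : ℝ) + A > 0 := by linarith
  have h1Ane : (1 : ℝ) + A ≠ 0 := ne_of_gt h1A
  set B : ℝ := ρ * Cy - (1 + lam) * θ * Cx / 2 with hB
  have hq10' : q10 * (1 + A) = 1 := by
    rw [hq10]; field_simp
  have hq20' : q20 * (Xbar * Cx) = q10 * Ybar * B := by
    rw [hq20, hB]; field_simp
  have key : M (q1, q2) - M (q10, q20) =
      Ybar ^ 2 * (1 + A) * (q1 - q10) ^ 2 +
        f1 * (q1 * Ybar * B - q2 * Xbar * Cx) ^ 2 := by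
    rw [hM, hM]
    linear_combination (Ybar ^ 2 * 2 * (q1 - q10)) * hq10'
      - (Ybar ^ 2 * (q1 ^ 2 - q10 ^ 2)) * hA
      - (f1 * (q20 * (Xbar * Cx) - q10 * Ybar * B)) * hq20'
  nlinarith [mul_nonneg (mul_nonneg (sq_nonneg Ybar) h1A.le) (sq_nonneg (q1 - q10)),
    mul_nonneg hf1.le (sq_nonneg (q1 * Ybar * B - q2 * Xbar * Cx))]
end

section
/- Let f1, Cy, Cx, θ, λ, ρ, Ȳ, X̄ be real numbers with X̄ ≠ 0, Cx ≠ 0 and 1 + f1·Cy²·(1 − ρ²) ≠ 0, and set A = f1·Cy²·(1 − ρ²). Define M(q1, q2) = Ȳ²(q1 − 1)² + f1·[ q1²·Ȳ²·(Cy² + θ²Cx²(1 + λ)²/4 − (1 + λ)·θ·ρ·Cy·Cx) + q2²·X̄²·Cx² − 2·q1·q2·Ȳ·X̄·Cx·(ρ·Cy − (1 + λ)·θ·Cx/2) ], q10 = 1/(1 + A) and q20 = q10·(Ȳ/(X̄·Cx))·(ρ·Cy − ((1 + λ)/2)·θ·Cx). Then M(q10, q20) = f1·Ȳ²·Cy²·(1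 − ρ²) / (1 + f1·Cy²·(1 − ρ²)), i.e. the value of the MSE at the optimum weights equals the expression in equation (24). -/
/-- The value of the MSE at the optimum weights equals the minimum MSE
expression of equation (24). -/
theorem proposed_min_mse_value
    (f1 Cy Cx θ lam ρ Ybar Xbar A : ℝ)
    (hXbar : Xbar ≠ 0) (hCxne : Cx ≠ 0)
    (hden : 1 + f1 * Cy ^ 2 * (1 - ρ ^ 2) ≠ 0)
    (hA : A = f1 * Cy ^ 2 * (1 - ρ ^ 2))
    (M : ℝ × ℝ → ℝ)
    (hM : ∀ q1 q2 : ℝ, M (q1, q2) =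
      Ybar ^ 2 * (q1 - 1) ^ 2 +
        f1 * (q1 ^ 2 * Ybar ^ 2 *
            (Cy ^ 2 + θ ^ 2 * Cx ^ 2 * (1 + lam) ^ 2 / 4 - (1 + lam) * θ * ρ * Cy * Cx) +
          q2 ^ 2 * Xbar ^ 2 * Cx ^ 2 -
          2 * q1 * q2 * Ybar * Xbar * Cx * (ρ * Cy - (1 + lam) * θ * Cx / 2)))
    (q10 q20 : ℝ)
    (hq10 : q10 = 1 / (1 + A))
    (hq20 : q20 = q10 * (Ybar / (Xbar * Cx)) * (ρ * Cy - ((1 + lam) / 2) * θ * Cx)) :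
    M (q10, q20) =
      f1 * Ybar ^ 2 * Cy ^ 2 * (1 - ρ ^ 2) / (1 + f1 * Cy ^ 2 * (1 - ρ ^ 2)) := by
  subst hA hq10 hq20
  rw [hM]
  field_simp
  ring
end

section
/- Let f1, Cy, Cx, θ, λ, ρ, Ȳ, X̄ be real numbers with f1 > 0, Cy > 0, Cx > 0, Ȳ ≠ 0, X̄ ≠ 0 and ρ² < 1, set A = f1·Cy²·(1 − ρ²), and define M(q1, q2) = Ȳ²(q1 − 1)² + f1·[ q1²·Ȳ²·(Cy² + θ²Cx²(1 + λ)²/4 − (1 + λ)·θ·ρ·Cy·Cx) + q2²·X̄²·Cx² − 2·q1·q2·Ȳ·X̄·Cx·(ρ·Cy − (1 + λ)·θ·Cx/2) ], q10 = 1/(1 + A) and q20 = q10·(Ȳ/(X̄·Cx))·(ρ·Cy − ((1 + λ)/2)·θ·Cx). If real numbers q1, q2 satisfy M(q1, q2) = M(q10, q20), then q1 = q10 and q2 = q20; that is, the optimum weights in equation (23) are the unique minimizer of the MSE. -/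
set_option maxHeartbeats 1000000


/-- The optimum weights of equation (23) are the unique minimizer of
the MSE `M`. -/
theorem proposed_weights_unique_min
    (f1 Cy Cx θ lam ρ Ybar Xbar A : ℝ)
    (hf1 : f1 > 0) (hCy : Cy > 0) (hCx : Cx > 0)
    (hYbar : Ybar ≠ 0) (hXbar : Xbar ≠ 0) (hρ : ρ ^ 2 < 1)
    (hA : A = f1 * Cy ^ 2 * (1 - ρ ^ 2))
    (M : ℝ × ℝ → ℝ)
    (hM : ∀ q1 q2 : ℝ, M (q1, q2) =
      Ybar ^ 2 * (q1 - 1) ^ 2 +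
        f1 * (q1 ^ 2 * Ybar ^ 2 *
            (Cy ^ 2 + θ ^ 2 * Cx ^ 2 * (1 + lam) ^ 2 / 4 - (1 + lam) * θ * ρ * Cy * Cx) +
          q2 ^ 2 * Xbar ^ 2 * Cx ^ 2 -
          2 * q1 * q2 * Ybar * Xbar * Cx * (ρ * Cy - (1 + lam) * θ * Cx / 2)))
    (q10 q20 : ℝ)
    (hq10 : q10 = 1 / (1 + A))
    (hq20 : q20 = q10 * (Ybar / (Xbar * Cx)) * (ρ * Cy - ((1 + lam) / 2) * θ * Cx))
    (q1 q2 : ℝ) (heq : M (q1, q2) = M (q10, q20)) :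
    q1 = q10 ∧ q2 = q20 := by
  have h1ρ : 0 < 1 - ρ ^ 2 := by linarith
  have hApos : 0 < 1 + A := by
    rw [hA]; nlinarith [mul_pos (mul_pos hf1 (pow_pos hCy 2)) h1ρ]
  have hAne : (1 + A) ≠ 0 := ne_of_gt hApos
  set C : ℝ := ρ * Cy - (1 + lam) / 2 * θ * Cx with hC
  have key : M (q1, q2) - M (q10, q20) =
      (1 + A) * Ybar ^ 2 * (q1 - q10) ^ 2 +
        f1 * ((q1 - q10) * Ybar * C - (q2 - q20) * Xbar * Cx) ^ 2 := by
    rw [hM, hM, hq20, hq10, hA, hC]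
    field_simp
    ring
  rw [heq, sub_self] at key
  have h1 : 0 ≤ (1 + A) * Ybar ^ 2 * (q1 - q10) ^ 2 := by positivity
  have h2 : 0 ≤ f1 * ((q1 - q10) * Ybar * C - (q2 - q20) * Xbar * Cx) ^ 2 := by positivity
  have e1 : (1 + A) * Ybar ^ 2 * (q1 - q10) ^ 2 = 0 := by linarith
  have hq1 : q1 = q10 := by
    have := mul_eq_zero.mp e1
    rcases this with h | h
    · exact absurd h (by positivity)
    · have := pow_eq_zero_iff (n := 2) (by norm_num) |>.mp h
      linarith
  have e2 : f1 * ((q1 - q10) * Ybar * C - (q2 - q20) * Xbar * Cx) ^ 2 = 0 := by linarith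
  have hsq : ((q1 - q10) * Ybar * C - (q2 - q20) * Xbar * Cx) ^ 2 = 0 := by
    rcases mul_eq_zero.mp e2 with h | h
    · exact absurd h (ne_of_gt hf1)
    · exact h
  have := pow_eq_zero_iff (n := 2) (by norm_num) |>.mp hsq
  rw [hq1, sub_self, zero_mul, zero_mul, zero_sub, neg_eq_zero] at this
  have hv : q2 - q20 = 0 := by
    rcases mul_eq_zero.mp this with h | h
    · rcases mul_eq_zero.mp h with h' | h'
      · exact h'
      · exact absurd h' hXbar
    · exact absurd h (ne_of_gt hCx)
  exact ⟨hq1, by linarith⟩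
end

section
/- Let f1, Cy, Cx, θ, λ, ρ, Ȳ, X̄ be real numbers with X̄ ≠ 0, Cx ≠ 0 and 1 + f1·Cy²·(1 − ρ²) ≠ 0, set A = f1·Cy²·(1 − ρ²), and define M(q1, q2) = Ȳ²(q1 − 1)² + f1·[ q1²·Ȳ²·(Cy² + θ²Cx²(1 + λ)²/4 − (1 + λ)·θ·ρ·Cy·Cx) + q2²·X̄²·Cx² − 2·q1·q2·Ȳ·X̄·Cx·(ρ·Cy − (1 + λ)·θ·Cx/2) ], q10 = 1/(1 + A) and q20 = q10·(Ȳ/(X̄·Cx))·(ρ·Cy − ((1 + λ)/2)·θ·Cx). Then (q10, q20) is a critical point of M: the derivative of q1 ↦ M(q1, q20) at q10 is zero, and the derivative of q2 ↦ M(q10, q2) at q20 is zero. -/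
theorem quad_deriv (a b c x0 : ℝ) :
    deriv (fun x : ℝ => a * x ^ 2 + b * x + c) x0 = 2 * a * x0 + b := by
  have h : HasDerivAt (fun x : ℝ => a * x ^ 2 + b * x + c)
      (a * (2 * x0 ^ 1) + b * 1 + 0) x0 := by
    exact (((hasDerivAt_pow 2 x0).const_mul a).add ((hasDerivAt_id' x0).const_mul b)).add
      (hasDerivAt_const x0 c)
  rw [h.deriv]; ring

/-- (q10, q20) is a critical point of the MSE `M`: both partial
derivatives vanish there. -/
theorem proposed_weights_critical_point
    (f1 Cy Cx θ lam ρ Ybar Xbar A : ℝ)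
    (hXbar : Xbar ≠ 0) (hCxne : Cx ≠ 0)
    (hden : 1 + f1 * Cy ^ 2 * (1 - ρ ^ 2) ≠ 0)
    (hA : A = f1 * Cy ^ 2 * (1 - ρ ^ 2))
    (M : ℝ × ℝ → ℝ)
    (hM : ∀ q1 q2 : ℝ, M (q1, q2) =
      Ybar ^ 2 * (q1 - 1) ^ 2 +
        f1 * (q1 ^ 2 * Ybar ^ 2 *
            (Cy ^ 2 + θ ^ 2 * Cx ^ 2 * (1 + lam) ^ 2 / 4 - (1 + lam) * θ * ρ * Cy * Cx) +
          q2 ^ 2 * Xbar ^ 2 * Cx ^ 2 -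
          2 * q1 * q2 * Ybar * Xbar * Cx * (ρ * Cy - (1 + lam) * θ * Cx / 2)))
    (q10 q20 : ℝ)
    (hq10 : q10 = 1 / (1 + A))
    (hq20 : q20 = q10 * (Ybar / (Xbar * Cx)) * (ρ * Cy - ((1 + lam) / 2) * θ * Cx)) :
    deriv (fun q1 : ℝ => M (q1, q20)) q10 = 0 ∧
      deriv (fun q2 : ℝ => M (q10, q2)) q20 = 0 := by
  have h1A : (1 : ℝ) + A ≠ 0 := by rw [hA]; exact hden
  constructor
  · have e1 : (fun q1 : ℝ => M (q1, q20)) =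
        fun q1 : ℝ =>
          (Ybar ^ 2 + f1 * (Ybar ^ 2 *
            (Cy ^ 2 + θ ^ 2 * Cx ^ 2 * (1 + lam) ^ 2 / 4 - (1 + lam) * θ * ρ * Cy * Cx))) * q1 ^ 2
          + (-2 * Ybar ^ 2 - 2 * f1 * q20 * Ybar * Xbar * Cx *
              (ρ * Cy - (1 + lam) * θ * Cx / 2)) * q1
          + (Ybar ^ 2 + f1 * (q20 ^ 2 * Xbar ^ 2 * Cx ^ 2)) := by
      funext q1; rw [hM]; ring
    rw [e1, quad_deriv]
    subst hq20 hq10 hA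
    field_simp
    ring
  · have e2 : (fun q2 : ℝ => M (q10, q2)) =
        fun q2 : ℝ =>
          (f1 * (Xbar ^ 2 * Cx ^ 2)) * q2 ^ 2
          + (-2 * f1 * q10 * Ybar * Xbar * Cx * (ρ * Cy - (1 + lam) * θ * Cx / 2)) * q2
          + (Ybar ^ 2 * (q10 - 1) ^ 2 + f1 * (q10 ^ 2 * Ybar ^ 2 *
              (Cy ^ 2 + θ ^ 2 * Cx ^ 2 * (1 + lam) ^ 2 / 4 - (1 + lam) * θ * ρ * Cy * Cx))) := by
      funext q2; rw [hM]; ring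
    rw [e2, quad_deriv]
    subst hq20
    field_simp
    ring
end

section
/- Let f1, Cy, Cx, θ, λ, ρ, Ȳ, X̄ be real numbers with f1 > 0, Cy > 0, Cx > 0, Ȳ ≠ 0, X̄ ≠ 0 and ρ² < 1. Then the function M : ℝ × ℝ → ℝ given by M(q1, q2) = Ȳ²(q1 − 1)² + f1·[ q1²·Ȳ²·(Cy² + θ²Cx²(1 + λ)²/4 − (1 + λ)·θ·ρ·Cy·Cx) + q2²·X̄²·Cx² − 2·q1·q2·Ȳ·X̄·Cx·(ρ·Cy − (1 + λ)·θ·Cx/2) ] is strictly convex on ℝ². -/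
set_option maxHeartbeats 1600000

/-- The MSE function `M` is strictly convex on ℝ². -/
theorem mse_strictly_convex
    (f1 Cy Cx θ lam ρ Ybar Xbar : ℝ)
    (hf1 : f1 > 0) (hCy : Cy > 0) (hCx : Cx > 0)
    (hYbar : Ybar ≠ 0) (hXbar : Xbar ≠ 0) (hρ : ρ ^ 2 < 1) :
    StrictConvexOn ℝ (Set.univ : Set (ℝ × ℝ)) (fun q : ℝ × ℝ =>
      Ybar ^ 2 * (q.1 - 1) ^ 2 +
        f1 * (q.1 ^ 2 * Ybar ^ 2 *
            (Cy ^ 2 + θ ^ 2 * Cx ^ 2 * (1 + lam) ^ 2 / 4 - (1 + lam) * θ * ρ * Cy * Cx) +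
          q.2 ^ 2 * Xbar ^ 2 * Cx ^ 2 -
          2 * q.1 * q.2 * Ybar * Xbar * Cx * (ρ * Cy - (1 + lam) * θ * Cx / 2))) := by
  constructor
  · exact convex_univ
  intro x _ y _ hxy a b ha hb hab
  have hb' : b = 1 - a := by linarith
  subst hb'
  simp only [Prod.smul_fst, Prod.smul_snd, Prod.fst_add, Prod.snd_add, smul_eq_mul]
  have hr : (0:ℝ) < 1 - ρ ^ 2 := by linarith
  have hQpos : 0 < (x.1 - y.1) ^ 2 * Ybar ^ 2 +
      f1 * ((Xbar * Cx * (x.2 - y.2) -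
          Ybar * (ρ * Cy - θ * (1 + lam) * Cx / 2) * (x.1 - y.1)) ^ 2 +
        Ybar ^ 2 * Cy ^ 2 * (1 - ρ ^ 2) * (x.1 - y.1) ^ 2) := by
    have hB : 0 ≤ (Xbar * Cx * (x.2 - y.2) -
        Ybar * (ρ * Cy - θ * (1 + lam) * Cx / 2) * (x.1 - y.1)) ^ 2 := sq_nonneg _
    have hC : 0 ≤ Ybar ^ 2 * Cy ^ 2 * (1 - ρ ^ 2) * (x.1 - y.1) ^ 2 := by positivity
    have hS : 0 ≤ f1 * ((Xbar * Cx * (x.2 - y.2) -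
          Ybar * (ρ * Cy - θ * (1 + lam) * Cx / 2) * (x.1 - y.1)) ^ 2 +
        Ybar ^ 2 * Cy ^ 2 * (1 - ρ ^ 2) * (x.1 - y.1) ^ 2) :=
      mul_nonneg hf1.le (add_nonneg hB hC)
    rcases eq_or_ne (x.1 - y.1) 0 with h1 | h1
    · have h2 : x.2 - y.2 ≠ 0 := by
        intro h2
        apply hxy
        have e1 : x.1 = y.1 := by simpa [sub_eq_zero] using h1
        have e2 : x.2 = y.2 := by simpa [sub_eq_zero] using h2
        exact Prod.ext e1 e2
      have hB' : 0 < f1 * ((Xbar * Cx * (x.2 - y.2) -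
          Ybar * (ρ * Cy - θ * (1 + lam) * Cx / 2) * (x.1 - y.1)) ^ 2 +
        Ybar ^ 2 * Cy ^ 2 * (1 - ρ ^ 2) * (x.1 - y.1) ^ 2) := by
        rw [h1]
        have : 0 < (Xbar * Cx * (x.2 - y.2)) ^ 2 := by positivity
        nlinarith
      nlinarith [sq_nonneg ((x.1 - y.1) * Ybar)]
    · have hA : 0 < (x.1 - y.1) ^ 2 * Ybar ^ 2 := by positivity
      linarith
  have key :
      a * (Ybar ^ 2 * (x.1 - 1) ^ 2 +
        f1 * (x.1 ^ 2 * Ybar ^ 2 *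
            (Cy ^ 2 + θ ^ 2 * Cx ^ 2 * (1 + lam) ^ 2 / 4 - (1 + lam) * θ * ρ * Cy * Cx) +
          x.2 ^ 2 * Xbar ^ 2 * Cx ^ 2 -
          2 * x.1 * x.2 * Ybar * Xbar * Cx * (ρ * Cy - (1 + lam) * θ * Cx / 2))) +
      (1 - a) * (Ybar ^ 2 * (y.1 - 1) ^ 2 +
        f1 * (y.1 ^ 2 * Ybar ^ 2 *
            (Cy ^ 2 + θ ^ 2 * Cx ^ 2 * (1 + lam) ^ 2 / 4 - (1 + lam) * θ * ρ * Cy * Cx) +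
          y.2 ^ 2 * Xbar ^ 2 * Cx ^ 2 -
          2 * y.1 * y.2 * Ybar * Xbar * Cx * (ρ * Cy - (1 + lam) * θ * Cx / 2))) -
      (Ybar ^ 2 * ((a * x.1 + (1 - a) * y.1) - 1) ^ 2 +
        f1 * ((a * x.1 + (1 - a) * y.1) ^ 2 * Ybar ^ 2 *
            (Cy ^ 2 + θ ^ 2 * Cx ^ 2 * (1 + lam) ^ 2 / 4 - (1 + lam) * θ * ρ * Cy * Cx) +
          (a * x.2 + (1 - a) * y.2) ^ 2 * Xbar ^ 2 * Cx ^ 2 -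
          2 * (a * x.1 + (1 - a) * y.1) * (a * x.2 + (1 - a) * y.2) * Ybar * Xbar * Cx *
            (ρ * Cy - (1 + lam) * θ * Cx / 2))) =
      a * (1 - a) * ((x.1 - y.1) ^ 2 * Ybar ^ 2 +
        f1 * ((Xbar * Cx * (x.2 - y.2) -
            Ybar * (ρ * Cy - θ * (1 + lam) * Cx / 2) * (x.1 - y.1)) ^ 2 +
          Ybar ^ 2 * Cy ^ 2 * (1 - ρ ^ 2) * (x.1 - y.1) ^ 2)) := by
    ring
  have hpos : 0 < a * (1 - a) * ((x.1 - y.1) ^ 2 * Ybar ^ 2 +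
      f1 * ((Xbar * Cx * (x.2 - y.2) -
          Ybar * (ρ * Cy - θ * (1 + lam) * Cx / 2) * (x.1 - y.1)) ^ 2 +
        Ybar ^ 2 * Cy ^ 2 * (1 - ρ ^ 2) * (x.1 - y.1) ^ 2)) :=
    mul_pos (mul_pos ha hb) hQpos
  linarith [key, hpos]
end

section
/- Let f1, Cy, Ȳ, ρ be real numbers with f1 ≥ 0 and ρ² ≤ 1, and set A = f1·Cy²·(1 − ρ²). Then f1·Ȳ²·Cy² − f1·Ȳ²·Cy²·(1 − ρ²)/(1 + A) = f1·Ȳ²·Cy²·(A + ρ²)/(1 + A), and in particular f1·Ȳ²·Cy² ≥ f1·Ȳ²·Cy²·(1 − ρ²)/(1 + A); that is, the mean squared error of the sample mean estimator is always at least the minimum MSE of the proposed estimator ȳ_λ. -/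
/-- The MSE of the sample mean estimator is at least the minimum MSE of
the proposed estimator ȳ_λ. -/
theorem sample_mean_vs_proposed
    (f1 Cy Ybar ρ A : ℝ) (hf1 : f1 ≥ 0) (hρ : ρ ^ 2 ≤ 1)
    (hA : A = f1 * Cy ^ 2 * (1 - ρ ^ 2)) :
    f1 * Ybar ^ 2 * Cy ^ 2 - f1 * Ybar ^ 2 * Cy ^ 2 * (1 - ρ ^ 2) / (1 + A) =
        f1 * Ybar ^ 2 * Cy ^ 2 * (A + ρ ^ 2) / (1 + A) ∧
      f1 * Ybar ^ 2 * Cy ^ 2 ≥ f1 * Ybar ^ 2 * Cy ^ 2 * (1 - ρ ^ 2) / (1 + A) := by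
  have hA0 : A ≥ 0 := by
    rw [hA]; exact mul_nonneg (mul_nonneg hf1 (sq_nonneg Cy)) (by linarith)
  have h1A : (0:ℝ) < 1 + A := by linarith
  constructor
  · field_simp
    ring
  · rw [ge_iff_le, div_le_iff₀ h1A]
    nlinarith [mul_nonneg (mul_nonneg hf1 (sq_nonneg Ybar)) (sq_nonneg Cy)]
end

section
/- Let f1, Cy, Cx, Ȳ, ρ be real numbers with f1 ≥ 0 and ρ² ≤ 1, and set A = f1·Cy²·(1 − ρ²). Then f1·Ȳ²·(Cy² + Cx² − 2·ρ·Cy·Cx) ≥ f1·Ȳ²·Cy²·(1 − ρ²)/(1 + A); that is, the mean squared error of the usual ratio estimator is always at least the minimum MSE of the proposed estimator ȳ_λ (condition (26) is always satisfied). -/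
/-- The MSE of the usual ratio estimator is at least the minimum MSE of
the proposed estimator ȳ_λ (condition (26) is always satisfied). -/
theorem ratio_vs_proposed
    (f1 Cy Cx Ybar ρ A : ℝ) (hf1 : f1 ≥ 0) (hρ : ρ ^ 2 ≤ 1)
    (hA : A = f1 * Cy ^ 2 * (1 - ρ ^ 2)) :
    f1 * Ybar ^ 2 * (Cy ^ 2 + Cx ^ 2 - 2 * ρ * Cy * Cx) ≥
      f1 * Ybar ^ 2 * Cy ^ 2 * (1 - ρ ^ 2) / (1 + A) := by
  have hA0 : A ≥ 0 := by
    rw [hA]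
    exact mul_nonneg (mul_nonneg hf1 (sq_nonneg Cy)) (by linarith)
  have h1A : (1 : ℝ) + A > 0 := by linarith
  have hP : 0 ≤ f1 * Ybar ^ 2 * Cy ^ 2 * (1 - ρ ^ 2) :=
    mul_nonneg (mul_nonneg (mul_nonneg hf1 (sq_nonneg Ybar)) (sq_nonneg Cy)) (by linarith)
  have step1 : f1 * Ybar ^ 2 * Cy ^ 2 * (1 - ρ ^ 2) / (1 + A)
      ≤ f1 * Ybar ^ 2 * Cy ^ 2 * (1 - ρ ^ 2) := by
    apply div_le_of_le_mul₀ (le_of_lt h1A) hP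
    nlinarith [mul_nonneg hP hA0]
  have step2 : f1 * Ybar ^ 2 * Cy ^ 2 * (1 - ρ ^ 2)
      ≤ f1 * Ybar ^ 2 * (Cy ^ 2 + Cx ^ 2 - 2 * ρ * Cy * Cx) := by
    nlinarith [sq_nonneg (Cx - ρ * Cy), mul_nonneg hf1 (sq_nonneg Ybar)]
  linarith
end

section
/- Let f1, Cy, Cx, Ȳ, ρ be real numbers with f1 ≥ 0 and ρ² ≤ 1, and set A = f1·Cy²·(1 − ρ²). Then f1·Ȳ²·(Cy² + Cx²/4 − ρ·Cy·Cx) ≥ f1·Ȳ²·Cy²·(1 − ρ²)/(1 + A); that is, the mean squared error of the Bahl–Tuteja exponential ratio-type estimator is always at least the minimum MSE of the proposed estimator ȳ_λ (condition (27) is always satisfied). -/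
/-- The MSE of the Bahl–Tuteja exponential ratio-type estimator is at
least the minimum MSE of the proposed estimator ȳ_λ (condition (27)). -/
theorem exponential_ratio_vs_proposed
    (f1 Cy Cx Ybar ρ A : ℝ) (hf1 : f1 ≥ 0) (hρ : ρ ^ 2 ≤ 1)
    (hA : A = f1 * Cy ^ 2 * (1 - ρ ^ 2)) :
    f1 * Ybar ^ 2 * (Cy ^ 2 + Cx ^ 2 / 4 - ρ * Cy * Cx) ≥
      f1 * Ybar ^ 2 * Cy ^ 2 * (1 - ρ ^ 2) / (1 + A) := by
  have hA0 : 0 ≤ A := by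
    rw [hA]
    have : 0 ≤ 1 - ρ ^ 2 := by linarith
    positivity
  have hnum : 0 ≤ f1 * Ybar ^ 2 * Cy ^ 2 * (1 - ρ ^ 2) := by
    have : 0 ≤ 1 - ρ ^ 2 := by linarith
    positivity
  have hdiv : f1 * Ybar ^ 2 * Cy ^ 2 * (1 - ρ ^ 2) / (1 + A) ≤
      f1 * Ybar ^ 2 * Cy ^ 2 * (1 - ρ ^ 2) :=
    div_le_self hnum (by linarith)
  have hle : f1 * Ybar ^ 2 * Cy ^ 2 * (1 - ρ ^ 2) ≤
      f1 * Ybar ^ 2 * (Cy ^ 2 + Cx ^ 2 / 4 - ρ * Cy * Cx) := by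
    nlinarith [sq_nonneg (ρ * Cy - Cx / 2), sq_nonneg Ybar, mul_nonneg hf1 (sq_nonneg Ybar),
      sq_nonneg (Ybar * (ρ * Cy - Cx / 2)), mul_nonneg (mul_nonneg hf1 (sq_nonneg Ybar)) (sq_nonneg (ρ * Cy - Cx / 2))]
  linarith
end

section
/- Let f1, Cy, Ȳ, ρ be real numbers with 1 + f1·Cy²·(1 − ρ²) > 0, and set A = f1·Cy²·(1 − ρ²). Then f1·Ȳ²·Cy²·(1 − ρ²) − f1·Ȳ²·Cy²·(1 − ρ²)/(1 + A) = (f1·Ȳ·Cy²·(1 − ρ²))²/(1 + A), and in particular f1·Ȳ²·Cy²·(1 − ρ²) ≥ f1·Ȳ²·Cy²·(1 − ρ²)/(1 + A); that is, the MSE of the linear regression estimator (equal to the minimum MSEs of the Khosnevisan et al. and Singh et al. estimators) is always at least the minimum MSE of the proposed estimator ȳ_λ (condition (30) is always satisfied). -/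
/-- The MSE of the linear regression estimator is at least the minimum
MSE of the proposed estimator ȳ_λ (condition (30)). -/
theorem regression_vs_proposed
    (f1 Cy Ybar ρ A : ℝ)
    (hden : 1 + f1 * Cy ^ 2 * (1 - ρ ^ 2) > 0)
    (hA : A = f1 * Cy ^ 2 * (1 - ρ ^ 2)) :
    f1 * Ybar ^ 2 * Cy ^ 2 * (1 - ρ ^ 2) -
          f1 * Ybar ^ 2 * Cy ^ 2 * (1 - ρ ^ 2) / (1 + A) =
        (f1 * Ybar * Cy ^ 2 * (1 - ρ ^ 2)) ^ 2 / (1 + A) ∧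
      f1 * Ybar ^ 2 * Cy ^ 2 * (1 - ρ ^ 2) ≥
        f1 * Ybar ^ 2 * Cy ^ 2 * (1 - ρ ^ 2) / (1 + A) := by
  subst hA
  have hne : (1 + f1 * Cy ^ 2 * (1 - ρ ^ 2)) ≠ 0 := ne_of_gt hden
  constructor
  · field_simp
    ring
  · have h := div_nonneg (sq_nonneg (f1 * Ybar * Cy ^ 2 * (1 - ρ ^ 2))) hden.le
    have heq : f1 * Ybar ^ 2 * Cy ^ 2 * (1 - ρ ^ 2) -
        f1 * Ybar ^ 2 * Cy ^ 2 * (1 - ρ ^ 2) / (1 + f1 * Cy ^ 2 * (1 - ρ ^ 2)) =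
        (f1 * Ybar * Cy ^ 2 * (1 - ρ ^ 2)) ^ 2 / (1 + f1 * Cy ^ 2 * (1 - ρ ^ 2)) := by
      field_simp
      ring
    linarith
end
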